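/- Let ρ₁, ρ₂, u₁, u₂ be smooth on Q_T = (0,1)×(0,T), with ρ_i > 0, solving ∂_t ρ_i + ∂ₓ(ρ_i u_i) = 0 and ρ_i(∂_t u_i + u_i ∂ₓu_i) + K_i ∂ₓ(ρ_i^{γ_i}) = Σ_j μ_{ij} ∂ₓₓu_j + (−1)^{i+1} a(u₂ − u₁), with u_i vanishing at x = 0, 1, where a > 0, K_i > 0, γ_i > 1, and the viscosity matrix satisfies (Mξ,ξ) ≥ M₀|ξ|². Then for all t ∈ [0,T]: Σ_i ∫₀¹ ((1/2)ρ_i u_i² + (K_i/(γ_i−1)) ρ_i^{γ_i}) dx + M₀ Σ_i ∫₀^t∫₀¹ |∂ₓu_i|² dx dτ + a ∫₀^t∫₀¹ |u₁−u₂|² dx dτ ≤ Σ_i ∫₀¹ ((1/2)ρ_{0i} u_{0i}² + (K_i/(γ_i−1)) ρ_{0i}^{γ_i}) dx. -/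

import Mathlib

open MeasureTheory intervalIntegral Set Real Metric

lemma aux_param_cont {F : ℝ × ℝ → ℝ} (hF : Continuous F) :
    Continuous fun t => ∫ x in (0:ℝ)..1, F (x, t) := by
  have h : Continuous fun t => ∫ x in Icc (0:ℝ) 1, F (x, t) :=
    continuous_parametric_integral_of_continuous
      (f := fun t x => F (x, t)) (hF.comp continuous_swap) isCompact_Icc
  have heq : ∀ t, ∫ x in (0:ℝ)..1, F (x, t) = ∫ x in Icc (0:ℝ) 1, F (x, t) := by
    intro t
    rw [intervalIntegral.integral_of_le zero_le_one,
      MeasureTheory.integral_Icc_eq_integral_Ioc]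
  simpa only [heq] using h

lemma aux_param_deriv {F Ft : ℝ × ℝ → ℝ} (hF : Continuous F) (hFt : Continuous Ft)
    (hd : ∀ x t, HasDerivAt (fun s => F (x, s)) (Ft (x, t)) t) (t₀ : ℝ) :
    HasDerivAt (fun s => ∫ x in (0:ℝ)..1, F (x, s)) (∫ x in (0:ℝ)..1, Ft (x, t₀)) t₀ := by
  obtain ⟨C, hC⟩ :=
    (isCompact_Icc.prod (isCompact_Icc (a := t₀ - 1) (b := t₀ + 1))).exists_bound_of_continuousOn
      hFt.continuousOn
  have key := intervalIntegral.hasDerivAt_integral_of_dominated_loc_of_deriv_le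
    (F := fun s x => F (x, s)) (F' := fun s x => Ft (x, s)) (x₀ := t₀) (a := (0:ℝ)) (b := 1)
    (bound := fun _ => C) (s := ball t₀ 1) (μ := volume) (ball_mem_nhds t₀ one_pos)
    (Filter.Eventually.of_forall fun s =>
      ((hF.comp (continuous_id.prodMk continuous_const)).aestronglyMeasurable))
    ((hF.comp (continuous_id.prodMk continuous_const)).intervalIntegrable 0 1)
    ((hFt.comp (continuous_id.prodMk continuous_const)).aestronglyMeasurable)
    (Filter.Eventually.of_forall fun x => fun hx s hs => by
      have hx' : x ∈ Icc (0:ℝ) 1 := mem_Icc_of_Ioc (by simpa using hx)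
      have hs' : s ∈ Icc (t₀ - 1) (t₀ + 1) := by
        rw [Real.ball_eq_Ioo] at hs
        exact Ioo_subset_Icc_self hs
      exact hC (x, s) (mk_mem_prod hx' hs'))
    (intervalIntegrable_const)
    (Filter.Eventually.of_forall fun x => fun hx s hs => hd x s)
  exact key.2

lemma aux_slice_int {F : ℝ × ℝ → ℝ} (hF : Continuous F) (s : ℝ) :
    IntervalIntegrable (fun x => F (x, s)) volume 0 1 :=
  (hF.comp (continuous_id.prodMk continuous_const)).intervalIntegrable 0 1

lemma aux_congr_deriv {f : ℝ → ℝ} {d d' x : ℝ}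
    (h : HasDerivAt f d x) (hd : d' = d) : HasDerivAt f d' x := hd ▸ h
set_option maxHeartbeats 1000000 in
/-- Fundamental energy estimate for the 1D barotropic two-fluid
system.  Smooth positive solutions of
`∂_tρ_i + ∂ₓ(ρ_i u_i) = 0`,
`ρ_i(∂_t u_i + u_i ∂ₓ u_i) + K_i ∂ₓ(ρ_i^{γ_i}) = Σ_j μ_{ij} ∂ₓₓu_j + (−1)^{i+1} a(u₂−u₁)`
with `u_i` vanishing at `x = 0,1` satisfy, for all `t ∈ [0,T]`,
`Σ_i ∫₀¹ (½ρ_iu_i² + K_i/(γ_i−1) ρ_i^{γ_i}) dx + M₀ Σ_i ∫₀ᵗ∫₀¹ |∂ₓu_i|²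
 + a ∫₀ᵗ∫₀¹ |u₁−u₂|² ≤ Σ_i ∫₀¹ (½ρ_{0i}u_{0i}² + K_i/(γ_i−1) ρ_{0i}^{γ_i}) dx`. -/
theorem statement10
    (T : ℝ) (hT : 0 < T)
    (a M₀ : ℝ) (ha : 0 < a) (hM₀ : 0 < M₀)
    (K γ : Fin 2 → ℝ) (hK : ∀ i, 0 < K i) (hγ : ∀ i, 1 < γ i)
    (μ : Fin 2 → Fin 2 → ℝ)
    (hμ : ∀ ξ : Fin 2 → ℝ, M₀ * (∑ i, (ξ i) ^ 2) ≤ ∑ i, ∑ j, μ i j * ξ j * ξ i)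
    -- unknowns and their derivatives
    (ρ u ρt mx ut ux uxx pγx : Fin 2 → ℝ → ℝ → ℝ)
    (hρpos : ∀ i x t, 0 < ρ i x t)
    (hsmooth : ∀ i, Continuous (fun p : ℝ × ℝ => ρ i p.1 p.2) ∧
      Continuous (fun p : ℝ × ℝ => u i p.1 p.2) ∧
      Continuous (fun p : ℝ × ℝ => ut i p.1 p.2) ∧
      Continuous (fun p : ℝ × ℝ => ux i p.1 p.2) ∧
      Continuous (fun p : ℝ × ℝ => uxx i p.1 p.2) ∧
      Continuous (fun p : ℝ × ℝ => ρt i p.1 p.2) ∧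
      Continuous (fun p : ℝ × ℝ => mx i p.1 p.2) ∧
      Continuous (fun p : ℝ × ℝ => pγx i p.1 p.2))
    (hρt : ∀ i x t, HasDerivAt (fun s => ρ i x s) (ρt i x t) t)
    (hmx : ∀ i x t, HasDerivAt (fun y => ρ i y t * u i y t) (mx i x t) x)
    (hut : ∀ i x t, HasDerivAt (fun s => u i x s) (ut i x t) t)
    (hux : ∀ i x t, HasDerivAt (fun y => u i y t) (ux i x t) x)
    (huxx : ∀ i x t, HasDerivAt (fun y => ux i y t) (uxx i x t) x)
    (hpγx : ∀ i x t, HasDerivAt (fun y => ρ i y t ^ γ i) (pγx i x t) x)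
    -- the equations
    (hmass : ∀ i x t, ρt i x t + mx i x t = 0)
    (hmom : ∀ i x t,
      ρ i x t * (ut i x t + u i x t * ux i x t) + K i * pγx i x t =
        (∑ j, μ i j * uxx j x t) +
          (-1) ^ ((i : ℕ) + 1 + 1) * a * (u 1 x t - u 0 x t))
    -- boundary conditions
    (hbc : ∀ i t, u i 0 t = 0 ∧ u i 1 t = 0) :
    ∀ t ∈ Icc 0 T,
      (∑ i, ∫ x in (0:ℝ)..1,
          ((1/2) * ρ i x t * (u i x t) ^ 2 +
            K i / (γ i - 1) * ρ i x t ^ γ i)) +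
        M₀ * (∑ i, ∫ τ in (0:ℝ)..t, ∫ x in (0:ℝ)..1, (ux i x τ) ^ 2) +
        a * (∫ τ in (0:ℝ)..t, ∫ x in (0:ℝ)..1, (u 0 x τ - u 1 x τ) ^ 2) ≤
      ∑ i, ∫ x in (0:ℝ)..1,
          ((1/2) * ρ i x 0 * (u i x 0) ^ 2 +
            K i / (γ i - 1) * ρ i x 0 ^ γ i) := by
  -- basic facts
  have hρ0 : ∀ i x t, ρ i x t ≠ 0 := fun i x t => (hρpos i x t).ne'
  have hγ1 : ∀ i, γ i - 1 ≠ 0 := fun i => sub_ne_zero.mpr (hγ i).ne'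
  have hγ0 : ∀ i, γ i ≠ 0 := fun i => (lt_trans one_pos (hγ i)).ne'
  -- the constant c
  obtain ⟨c, hc, hKc⟩ : ∃ c : Fin 2 → ℝ, (∀ i, c i = K i / (γ i - 1)) ∧
      (∀ i, K i = c i * (γ i - 1)) :=
    ⟨fun i => K i / (γ i - 1), fun i => rfl,
      fun i => (div_mul_cancel₀ (K i) (hγ1 i)).symm⟩
  -- continuity components
  have hcρ : ∀ i, Continuous (fun p : ℝ × ℝ => ρ i p.1 p.2) := fun i => (hsmooth i).1
  have hcu : ∀ i, Continuous (fun p : ℝ × ℝ => u i p.1 p.2) := fun i => (hsmooth i).2.1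
  have hcut : ∀ i, Continuous (fun p : ℝ × ℝ => ut i p.1 p.2) := fun i => (hsmooth i).2.2.1
  have hcux : ∀ i, Continuous (fun p : ℝ × ℝ => ux i p.1 p.2) := fun i => (hsmooth i).2.2.2.1
  have hcuxx : ∀ i, Continuous (fun p : ℝ × ℝ => uxx i p.1 p.2) := fun i => (hsmooth i).2.2.2.2.1
  have hcρt : ∀ i, Continuous (fun p : ℝ × ℝ => ρt i p.1 p.2) := fun i => (hsmooth i).2.2.2.2.2.1
  have hcmx : ∀ i, Continuous (fun p : ℝ × ℝ => mx i p.1 p.2) := fun i => (hsmooth i).2.2.2.2.2.2.1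
  have hcpγx : ∀ i, Continuous (fun p : ℝ × ℝ => pγx i p.1 p.2) :=
    fun i => (hsmooth i).2.2.2.2.2.2.2
  have hcB : ∀ i, Continuous fun p : ℝ × ℝ => ρ i p.1 p.2 ^ (γ i - 1) :=
    fun i => (hcρ i).rpow_const fun p => Or.inl (hρ0 i p.1 p.2)
  have hcG : ∀ i, Continuous fun p : ℝ × ℝ => ρ i p.1 p.2 ^ γ i :=
    fun i => (hcρ i).rpow_const fun p => Or.inl (hρ0 i p.1 p.2)
  -- existence of the space derivative of ρ
  have hρxE : ∀ i x t, ∃ d, HasDerivAt (fun y => ρ i y t) d x := by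
    intro i x t
    have h1 := (hpγx i x t).rpow_const (p := 1 / γ i)
      (Or.inl (Real.rpow_pos_of_pos (hρpos i x t) (γ i)).ne')
    have heq : (fun y => (ρ i y t ^ γ i) ^ (1 / γ i)) = fun y => ρ i y t := by
      funext y
      rw [← Real.rpow_mul (hρpos i y t).le, mul_one_div, div_self (hγ0 i), Real.rpow_one]
    rw [heq] at h1
    exact ⟨_, h1⟩
  choose ρx hρx using hρxE
  have hpγeq : ∀ i x t, pγx i x t = ρx i x t * γ i * ρ i x t ^ (γ i - 1) := fun i x t =>
    (hpγx i x t).unique ((hρx i x t).rpow_const (Or.inl (hρ0 i x t)))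
  have hmxeq : ∀ i x t, mx i x t = ρx i x t * u i x t + ρ i x t * ux i x t := fun i x t =>
    (hmx i x t).unique ((hρx i x t).mul (hux i x t))
  have hρteq : ∀ i x t, ρt i x t = -(ρx i x t * u i x t + ρ i x t * ux i x t) := by
    intro i x t
    have h1 := hmass i x t
    have h2 := hmxeq i x t
    linarith
  have hrg : ∀ i x t, ρ i x t ^ γ i = ρ i x t ^ (γ i - 1) * ρ i x t := by
    intro i x t
    rw [← Real.rpow_add_one (hρ0 i x t), sub_add_cancel]
  -- time derivative of the energy density
  obtain ⟨et, het_def⟩ : ∃ et : Fin 2 → ℝ → ℝ → ℝ, et = fun i x t =>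
    1/2 * ρt i x t * u i x t ^ 2 + 1/2 * ρ i x t * (2 * u i x t * ut i x t) +
      c i * (ρt i x t * γ i * ρ i x t ^ (γ i - 1)) := ⟨_, rfl⟩
  have hedera : ∀ i x t, HasDerivAt
      (fun s => 1/2 * ρ i x s * u i x s ^ 2 + c i * ρ i x s ^ γ i) (et i x t) t := by
    intro i x t
    have h1 := ((hρt i x t).const_mul (1/2 : ℝ)).mul ((hut i x t).pow 2)
    have h2 := ((hρt i x t).rpow_const (p := γ i) (Or.inl (hρ0 i x t))).const_mul (c i)
    refine aux_congr_deriv (h1.add h2) ?_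
    simp only [het_def, Pi.pow_apply]
    push_cast
    ring
  -- the flux and its space derivative
  obtain ⟨Hf, hHf_def⟩ : ∃ Hf : Fin 2 → ℝ → ℝ → ℝ, Hf = fun i x t =>
    1/2 * (ρ i x t * u i x t * u i x t ^ 2) + c i * γ i * (ρ i x t ^ γ i * u i x t) -
      ∑ j, μ i j * (u i x t * ux j x t) := ⟨_, rfl⟩
  obtain ⟨Hx, hHx_def⟩ : ∃ Hx : Fin 2 → ℝ → ℝ → ℝ, Hx = fun i x t =>
    1/2 * (mx i x t * u i x t ^ 2 + ρ i x t * u i x t * (2 * u i x t * ux i x t)) +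
      c i * γ i * (pγx i x t * u i x t + ρ i x t ^ γ i * ux i x t) -
      ∑ j, μ i j * (ux i x t * ux j x t + u i x t * uxx j x t) := ⟨_, rfl⟩
  have hH : ∀ i x t, HasDerivAt (fun y => Hf i y t) (Hx i x t) x := by
    intro i x t
    rw [hHf_def]
    have h1 := ((hmx i x t).mul ((hux i x t).pow 2)).const_mul (1/2 : ℝ)
    have h2 := ((hpγx i x t).mul (hux i x t)).const_mul (c i * γ i)
    have h3 : HasDerivAt (fun y => ∑ j, μ i j * (u i y t * ux j y t))
        (∑ j, μ i j * (ux i x t * ux j x t + u i x t * uxx j x t)) x :=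
      HasDerivAt.fun_sum fun j _ => ((hux i x t).mul (huxx j x t)).const_mul (μ i j)
    refine aux_congr_deriv ((h1.add h2).sub h3) ?_
    simp only [hHx_def, Pi.pow_apply]
    push_cast
    ring
  have hHf0 : ∀ i t, Hf i 0 t = 0 := by
    intro i t; simp [hHf_def, (hbc i t).1]
  have hHf1 : ∀ i t, Hf i 1 t = 0 := by
    intro i t; simp [hHf_def, (hbc i t).2]
  -- key pointwise identity
  have key : ∀ x t, (∑ i, et i x t) + (∑ i, Hx i x t) =
      -(∑ i, ∑ j, μ i j * ux j x t * ux i x t) - a * (u 0 x t - u 1 x t) ^ 2 := by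
    intro x t
    have h0 := hmom 0 x t
    have h1 := hmom 1 x t
    simp only [Fin.sum_univ_two, Fin.val_zero, Fin.val_one, Fin.isValue] at h0 h1 ⊢
    norm_num at h0 h1
    rw [hKc 0] at h0
    rw [hKc 1] at h1
    simp only [hpγeq] at h0 h1
    simp only [het_def, hHx_def, Fin.sum_univ_two, Fin.isValue]
    simp only [hρteq, hmxeq, hpγeq, hrg]
    linear_combination u 0 x t * h0 + u 1 x t * h1
  -- continuity of composite functions
  have hcei : ∀ i, Continuous fun p : ℝ × ℝ =>
      1/2 * ρ i p.1 p.2 * u i p.1 p.2 ^ 2 + c i * ρ i p.1 p.2 ^ γ i := by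
    intro i
    exact ((continuous_const.mul (hcρ i)).mul ((hcu i).pow 2)).add
      (continuous_const.mul (hcG i))
  have hcE : Continuous fun p : ℝ × ℝ =>
      ∑ i, (1/2 * ρ i p.1 p.2 * u i p.1 p.2 ^ 2 + c i * ρ i p.1 p.2 ^ γ i) := by
    simp only [Fin.sum_univ_two, Fin.isValue]
    exact (hcei 0).add (hcei 1)
  have hceti : ∀ i, Continuous fun p : ℝ × ℝ => et i p.1 p.2 := by
    intro i
    simp only [het_def]
    exact (((continuous_const.mul (hcρt i)).mul ((hcu i).pow 2)).add
      ((continuous_const.mul (hcρ i)).mul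
        ((continuous_const.mul (hcu i)).mul (hcut i)))).add
      (continuous_const.mul (((hcρt i).mul continuous_const).mul (hcB i)))
  have hcet : Continuous fun p : ℝ × ℝ => ∑ i, et i p.1 p.2 := by
    simp only [Fin.sum_univ_two, Fin.isValue]
    exact (hceti 0).add (hceti 1)
  have hcHxi : ∀ i, Continuous fun p : ℝ × ℝ => Hx i p.1 p.2 := by
    intro i
    simp only [hHx_def, Fin.sum_univ_two, Fin.isValue]
    refine Continuous.sub (Continuous.add ?_ ?_) (Continuous.add ?_ ?_)
    · exact continuous_const.mul (((hcmx i).mul ((hcu i).pow 2)).add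
        (((hcρ i).mul (hcu i)).mul ((continuous_const.mul (hcu i)).mul (hcux i))))
    · exact continuous_const.mul (((hcpγx i).mul (hcu i)).add ((hcG i).mul (hcux i)))
    · exact continuous_const.mul (((hcux i).mul (hcux 0)).add ((hcu i).mul (hcuxx 0)))
    · exact continuous_const.mul (((hcux i).mul (hcux 1)).add ((hcu i).mul (hcuxx 1)))
  have hcHxs : Continuous fun p : ℝ × ℝ => ∑ i, Hx i p.1 p.2 := by
    simp only [Fin.sum_univ_two, Fin.isValue]
    exact (hcHxi 0).add (hcHxi 1)
  have hcμs : Continuous fun p : ℝ × ℝ => ∑ i, ∑ j, μ i j * ux j p.1 p.2 * ux i p.1 p.2 := by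
    simp only [Fin.sum_univ_two, Fin.isValue]
    exact (((continuous_const.mul (hcux 0)).mul (hcux 0)).add
      ((continuous_const.mul (hcux 1)).mul (hcux 0))).add
      (((continuous_const.mul (hcux 0)).mul (hcux 1)).add
      ((continuous_const.mul (hcux 1)).mul (hcux 1)))
  have hcdiffs : Continuous fun p : ℝ × ℝ => (u 0 p.1 p.2 - u 1 p.1 p.2) ^ 2 :=
    ((hcu 0).sub (hcu 1)).pow 2
  have hcux2 : ∀ i, Continuous fun p : ℝ × ℝ => ux i p.1 p.2 ^ 2 := fun i => (hcux i).pow 2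
  -- the flux integrates to zero
  have hflux : ∀ s, (∫ x in (0:ℝ)..1, ∑ i, Hx i x s) = 0 := by
    intro s
    have hint : IntervalIntegrable (fun x => ∑ i, Hx i x s) volume 0 1 :=
      aux_slice_int hcHxs s
    have h2 : (∫ x in (0:ℝ)..1, ∑ i, Hx i x s) = (∑ i, Hf i 1 s) - ∑ i, Hf i 0 s :=
      intervalIntegral.integral_eq_sub_of_hasDerivAt
        (fun x _ => HasDerivAt.sum fun i _ => hH i x s) hint
    rw [h2]
    simp [hHf0, hHf1]
  -- value of the energy derivative
  have hval : ∀ s, (∫ x in (0:ℝ)..1, ∑ i, et i x s) =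
      -(∫ x in (0:ℝ)..1, ∑ i, ∑ j, μ i j * ux j x s * ux i x s) -
        a * ∫ x in (0:ℝ)..1, (u 0 x s - u 1 x s) ^ 2 := by
    intro s
    have hIet : IntervalIntegrable (fun x => ∑ i, et i x s) volume 0 1 :=
      aux_slice_int hcet s
    have hIHx : IntervalIntegrable (fun x => ∑ i, Hx i x s) volume 0 1 :=
      aux_slice_int hcHxs s
    have hIμ : IntervalIntegrable
        (fun x => ∑ i, ∑ j, μ i j * ux j x s * ux i x s) volume 0 1 :=
      aux_slice_int hcμs s
    have hIdiff : IntervalIntegrable (fun x => (u 0 x s - u 1 x s) ^ 2) volume 0 1 :=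
      aux_slice_int hcdiffs s
    have h1 : (∫ x in (0:ℝ)..1, ∑ i, et i x s) =
        ∫ x in (0:ℝ)..1, ((∑ i, et i x s) + ∑ i, Hx i x s) := by
      rw [intervalIntegral.integral_add hIet hIHx, hflux s, add_zero]
    rw [h1, intervalIntegral.integral_congr
      (g := fun x => -(∑ i, ∑ j, μ i j * ux j x s * ux i x s) - a * (u 0 x s - u 1 x s) ^ 2)
      (fun x _ => key x s)]
    have hIμn : IntervalIntegrable
        (fun x => -(∑ i, ∑ j, μ i j * ux j x s * ux i x s)) volume 0 1 := hIμ.neg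
    have hIdiffa : IntervalIntegrable
        (fun x => a * (u 0 x s - u 1 x s) ^ 2) volume 0 1 := hIdiff.const_mul a
    rw [intervalIntegral.integral_sub hIμn hIdiffa,
      intervalIntegral.integral_neg, intervalIntegral.integral_const_mul]
  -- derivative of the energy
  have hE' : ∀ s, HasDerivAt
      (fun r => ∫ x in (0:ℝ)..1,
        ∑ i, (1/2 * ρ i x r * u i x r ^ 2 + c i * ρ i x r ^ γ i))
      (-(∫ x in (0:ℝ)..1, ∑ i, ∑ j, μ i j * ux j x s * ux i x s) -
        a * ∫ x in (0:ℝ)..1, (u 0 x s - u 1 x s) ^ 2) s := by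
    intro s
    have h : HasDerivAt
        (fun r => ∫ x in (0:ℝ)..1,
          ∑ i, (1/2 * ρ i x r * u i x r ^ 2 + c i * ρ i x r ^ γ i))
        (∫ x in (0:ℝ)..1, ∑ i, et i x s) s :=
      aux_param_deriv hcE hcet
        (fun x r => HasDerivAt.fun_sum fun i _ => hedera i x r) s
    rw [hval s] at h
    exact h
  -- derivative of dissipation terms
  have hfc : ∀ i, Continuous fun τ => ∫ x in (0:ℝ)..1, ux i x τ ^ 2 :=
    fun i => aux_param_cont (hcux2 i)
  have hgc : Continuous fun τ => ∫ x in (0:ℝ)..1, (u 0 x τ - u 1 x τ) ^ 2 :=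
    aux_param_cont hcdiffs
  have hfD : ∀ i s, HasDerivAt (fun r => ∫ τ in (0:ℝ)..r, ∫ x in (0:ℝ)..1, ux i x τ ^ 2)
      (∫ x in (0:ℝ)..1, ux i x s ^ 2) s := fun i s =>
    intervalIntegral.integral_hasDerivAt_right ((hfc i).intervalIntegrable 0 s)
      (hfc i).stronglyMeasurable.stronglyMeasurableAtFilter (hfc i).continuousAt
  have hgD : ∀ s, HasDerivAt
      (fun r => ∫ τ in (0:ℝ)..r, ∫ x in (0:ℝ)..1, (u 0 x τ - u 1 x τ) ^ 2)
      (∫ x in (0:ℝ)..1, (u 0 x s - u 1 x s) ^ 2) s := fun s =>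
    intervalIntegral.integral_hasDerivAt_right (hgc.intervalIntegrable 0 s)
      hgc.stronglyMeasurable.stronglyMeasurableAtFilter hgc.continuousAt
  -- the full Lyapunov functional and its derivative
  have hGd : ∀ s, HasDerivAt
      (fun r => (∫ x in (0:ℝ)..1,
          ∑ i, (1/2 * ρ i x r * u i x r ^ 2 + c i * ρ i x r ^ γ i)) +
        M₀ * ((∫ τ in (0:ℝ)..r, ∫ x in (0:ℝ)..1, ux 0 x τ ^ 2) +
          ∫ τ in (0:ℝ)..r, ∫ x in (0:ℝ)..1, ux 1 x τ ^ 2) +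
        a * ∫ τ in (0:ℝ)..r, ∫ x in (0:ℝ)..1, (u 0 x τ - u 1 x τ) ^ 2)
      ((-(∫ x in (0:ℝ)..1, ∑ i, ∑ j, μ i j * ux j x s * ux i x s) -
          a * ∫ x in (0:ℝ)..1, (u 0 x s - u 1 x s) ^ 2) +
        M₀ * ((∫ x in (0:ℝ)..1, ux 0 x s ^ 2) + ∫ x in (0:ℝ)..1, ux 1 x s ^ 2) +
        a * ∫ x in (0:ℝ)..1, (u 0 x s - u 1 x s) ^ 2) s := fun s =>
    ((hE' s).add (((hfD 0 s).add (hfD 1 s)).const_mul M₀)).add ((hgD s).const_mul a)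
  -- nonpositivity of the derivative
  have hDnp : ∀ s, ((-(∫ x in (0:ℝ)..1, ∑ i, ∑ j, μ i j * ux j x s * ux i x s) -
          a * ∫ x in (0:ℝ)..1, (u 0 x s - u 1 x s) ^ 2) +
        M₀ * ((∫ x in (0:ℝ)..1, ux 0 x s ^ 2) + ∫ x in (0:ℝ)..1, ux 1 x s ^ 2) +
        a * ∫ x in (0:ℝ)..1, (u 0 x s - u 1 x s) ^ 2) ≤ 0 := by
    intro s
    have hmono : M₀ * ((∫ x in (0:ℝ)..1, ux 0 x s ^ 2) + ∫ x in (0:ℝ)..1, ux 1 x s ^ 2) ≤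
        ∫ x in (0:ℝ)..1, ∑ i, ∑ j, μ i j * ux j x s * ux i x s := by
      have I0 : IntervalIntegrable (fun x => ux 0 x s ^ 2) volume 0 1 :=
        aux_slice_int (hcux2 0) s
      have I1 : IntervalIntegrable (fun x => ux 1 x s ^ 2) volume 0 1 :=
        aux_slice_int (hcux2 1) s
      have Iμ : IntervalIntegrable
          (fun x => ∑ i, ∑ j, μ i j * ux j x s * ux i x s) volume 0 1 :=
        aux_slice_int hcμs s
      have heq : M₀ * ((∫ x in (0:ℝ)..1, ux 0 x s ^ 2) + ∫ x in (0:ℝ)..1, ux 1 x s ^ 2) =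
          ∫ x in (0:ℝ)..1, M₀ * (ux 0 x s ^ 2 + ux 1 x s ^ 2) := by
        rw [intervalIntegral.integral_const_mul, intervalIntegral.integral_add I0 I1]
      rw [heq]
      refine intervalIntegral.integral_mono_on zero_le_one
        ((I0.add I1).const_mul M₀) Iμ ?_
      intro x hx
      simpa [Fin.sum_univ_two] using hμ fun j => ux j x s
    linarith
  -- conclude by monotonicity
  have hanti := antitone_of_hasDerivAt_nonpos hGd hDnp
  intro t ht
  have hkey := hanti ht.1
  have hIE : ∀ i s, IntervalIntegrable
      (fun x => 1/2 * ρ i x s * u i x s ^ 2 + c i * ρ i x s ^ γ i) volume 0 1 :=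
    fun i s => aux_slice_int (hcei i) s
  have hsum_int : ∀ s, (∫ x in (0:ℝ)..1, (1/2 * ρ 0 x s * u 0 x s ^ 2 + c 0 * ρ 0 x s ^ γ 0)) +
      (∫ x in (0:ℝ)..1, (1/2 * ρ 1 x s * u 1 x s ^ 2 + c 1 * ρ 1 x s ^ γ 1)) =
      ∫ x in (0:ℝ)..1, ∑ i, (1/2 * ρ i x s * u i x s ^ 2 + c i * ρ i x s ^ γ i) := by
    intro s
    rw [← intervalIntegral.integral_add (hIE 0 s) (hIE 1 s)]
    refine intervalIntegral.integral_congr fun x _ => ?_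
    simp [Fin.sum_univ_two]
  simp only [← hc, Fin.sum_univ_two, Fin.isValue]
  rw [hsum_int t, hsum_int 0]
  have h00 : (∫ τ in (0:ℝ)..(0:ℝ), ∫ x in (0:ℝ)..1, ux 0 x τ ^ 2) = 0 :=
    intervalIntegral.integral_same
  have h01 : (∫ τ in (0:ℝ)..(0:ℝ), ∫ x in (0:ℝ)..1, ux 1 x τ ^ 2) = 0 :=
    intervalIntegral.integral_same
  have h02 : (∫ τ in (0:ℝ)..(0:ℝ), ∫ x in (0:ℝ)..1, (u 0 x τ - u 1 x τ) ^ 2) = 0 :=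
    intervalIntegral.integral_same
  have hfin := hkey
  simp only [h00, h01, h02, mul_zero, add_zero] at hfin
  exact hfin
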